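/- Let f belong to (an equivalence class in) L^1(P̃_X), let 𝒫 = {S_1,…,S_m} partition N, let g be a coalitional value of two-coefficient form whose coefficient families are nonnegative and each sum to one, and let (𝒜^(k), 𝒯^(k), X^(k)), k = 1,…,K, be independent samples from P_j^{(g,𝒫)} ⊗ P_i^{(g,S_j)} ⊗ P_X. Then for P_X-almost every x*, the error 𝓔_K := K^{-1} Σ_{k=1}^K Δ_i(𝒜^(k), 𝒯^(k), X^(k); x*, f) − g_i[N, v^{ME}(·; x*, X, f), 𝒫] converges to 0 in probability as K → ∞; and if moreover f ∈ L^2(P̃_X), then ‖𝓔_K‖²_{L²(ℙ)} ≤ K^{-1} · Var(Δ_i(𝒜^(1), 𝒯^(1), X^(1); x*, f)) ≤ (4/K) · ν_{x*}^{(2)}(f, 𝒫, S_j) · max_{A⊆M∖{j}, T⊆S_j∖{i}} ( w_j^{(1)}(A,M) w_i^{(2)}(T,S_j) ), so 𝓔_K → 0 in L²(ℙ) at rate O(K^{-1/2}). -/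

import Mathlib

open MeasureTheory ProbabilityTheory ENNReal Filter Finset

set_option maxHeartbeats 2000000

noncomputable section

/-- Discrete σ-algebra on the (finite) space of coalitions. -/
instance {k : ℕ} : MeasurableSpace (Finset (Fin k)) := ⊤

/-- `merge n S y x` is the vector in `ℝ^n` agreeing with `y` on `S` and with `x` on `N∖S`,
i.e. the vector `(y_S, x_{-S})`. -/
def merge (n : ℕ) (S : Finset (Fin n)) (y x : Fin n → ℝ) : Fin n → ℝ :=
  fun i => if i ∈ S then y i else x i

/-- The product measure `P_{X_S} ⊗ P_{X_{-S}}` viewed as a measure on `ℝ^n`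
(obtained by merging two independent copies along `S`). -/
def prodPart (n : ℕ) (P : Measure (Fin n → ℝ)) (S : Finset (Fin n)) :
    Measure (Fin n → ℝ) :=
  (P.prod P).map (fun q => merge n S q.1 q.2)

/-- The mixture measure `P̃_X = 2^{-n} ∑_{S ⊆ N} P_{X_S} ⊗ P_{X_{-S}}` on `ℝ^n`. -/
def tildeP (n : ℕ) (P : Measure (Fin n → ℝ)) : Measure (Fin n → ℝ) :=
  ((2 : ℝ≥0∞) ^ n)⁻¹ • ∑ S : Finset (Fin n), prodPart n P S

/-- The marginal game `v^{ME}(S; x*, X, f) = E[f(x*_S, X_{-S})]`. -/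
def vME (n : ℕ) (P : Measure (Fin n → ℝ)) (f : (Fin n → ℝ) → ℝ)
    (xs : Fin n → ℝ) (S : Finset (Fin n)) : ℝ :=
  ∫ x, f (merge n S xs x) ∂P

/-- A linear game value `h_i[N,v] = ∑_{S ⊆ N∖{i}} w(S) (v(S∪{i}) - v(S))`. -/
def gameValue (n : ℕ) (w : Finset (Fin n) → ℝ) (i : Fin n)
    (v : Finset (Fin n) → ℝ) : ℝ :=
  ∑ S ∈ (univ.erase i).powerset, w S * (v (insert i S) - v S)

/-- The discrete measure on subsets of `D` assigning mass `w T` to each `T ⊆ D`.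
For `D = N∖{i}` and nonnegative weights summing to one this is `P_i^{(h)}`. -/
def subsetMeasure (k : ℕ) (D : Finset (Fin k)) (w : Finset (Fin k) → ℝ) :
    Measure (Finset (Fin k)) :=
  ∑ T ∈ D.powerset, (ENNReal.ofReal (w T)) • Measure.dirac T

/-- `Δ_i(S, x; x*, f) = f(x*_{S∪{i}}, x_{-(S∪{i})}) - f(x*_S, x_{-S})`. -/
def deltaFun (n : ℕ) (f : (Fin n → ℝ) → ℝ) (i : Fin n) (xs : Fin n → ℝ) :
    Finset (Fin n) × (Fin n → ℝ) → ℝ :=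
  fun q => f (merge n (insert i q.1) xs q.2) - f (merge n q.1 xs q.2)

/-- The union `Q_A = ∪_{α ∈ A} S_α` of the groups indexed by `A ⊆ M`. -/
def qUnion (n m : ℕ) (Pt : Fin m → Finset (Fin n)) (A : Finset (Fin m)) :
    Finset (Fin n) :=
  A.biUnion Pt

/-- `Δ_j(A, x; x*, f) = f(x*_{Q_{A∪{j}}}, x_{-Q_{A∪{j}}}) − f(x*_{Q_A}, x_{-Q_A})`
for a partition `Pt = {S_1,…,S_m}` of `N`. -/
def qDelta (n m : ℕ) (Pt : Fin m → Finset (Fin n)) (f : (Fin n → ℝ) → ℝ)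
    (j : Fin m) (xs : Fin n → ℝ) : Finset (Fin m) × (Fin n → ℝ) → ℝ :=
  fun q => f (merge n (qUnion n m Pt (insert j q.1)) xs q.2)
    - f (merge n (qUnion n m Pt q.1) xs q.2)

/-- A coalitional value of two-coefficient form:
`g_i[N, v, 𝒫] = ∑_{A⊆M∖{j}} ∑_{T⊆S_j∖{i}} w¹_j(A,M) w²_i(T,S_j)
  [v(Q_A ∪ T ∪ {i}) − v(Q_A ∪ T)]` for `i ∈ S_j`. -/
def coalVal (n m : ℕ) (Pt : Fin m → Finset (Fin n)) (j : Fin m) (i : Fin n)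
    (w1 : Finset (Fin m) → ℝ) (w2 : Finset (Fin n) → ℝ)
    (v : Finset (Fin n) → ℝ) : ℝ :=
  ∑ A ∈ (univ.erase j).powerset, ∑ T ∈ ((Pt j).erase i).powerset,
    w1 A * w2 T *
      (v (insert i (qUnion n m Pt A ∪ T)) - v (qUnion n m Pt A ∪ T))

/-- `Δ_i(A, T, x; x*, f) = f(x*_{Q_A∪T∪{i}}, x_{-(Q_A∪T∪{i})}) − f(x*_{Q_A∪T}, x_{-(Q_A∪T)})`. -/
def cDelta (n m : ℕ) (Pt : Fin m → Finset (Fin n)) (f : (Fin n → ℝ) → ℝ)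
    (i : Fin n) (xs : Fin n → ℝ) :
    Finset (Fin m) × (Finset (Fin n) × (Fin n → ℝ)) → ℝ :=
  fun q => f (merge n (insert i (qUnion n m Pt q.1 ∪ q.2.1)) xs q.2.2)
    - f (merge n (qUnion n m Pt q.1 ∪ q.2.1) xs q.2.2)

section AuxLemmas


instance {k : ℕ} : MeasurableSingletonClass (Finset (Fin k)) := ⟨fun _ => trivial⟩

instance (k : ℕ) (D : Finset (Fin k)) (w : Finset (Fin k) → ℝ) :
    IsFiniteMeasure (subsetMeasure k D w) := by
  constructor
  rw [subsetMeasure]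
  simp only [Measure.coe_finset_sum, Finset.sum_apply, Measure.smul_apply, smul_eq_mul,
    Measure.dirac_apply, Set.indicator_univ, Pi.one_apply, mul_one]
  exact ENNReal.sum_lt_top.mpr (fun T _ => ENNReal.ofReal_lt_top)

lemma subsetMeasure_prod {k : ℕ} (D : Finset (Fin k)) (w : Finset (Fin k) → ℝ)
    {β : Type*} [MeasurableSpace β] (ν : Measure β) [SigmaFinite ν] :
    (subsetMeasure k D w).prod ν
      = ∑ T ∈ D.powerset, (ENNReal.ofReal (w T)) • ν.map (Prod.mk T) := by
  classical
  refine Measure.prod_eq fun s t hs ht => ?_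
  simp only [Measure.coe_finset_sum, Finset.sum_apply, Measure.smul_apply, smul_eq_mul,
    Measure.map_apply measurable_prodMk_left (hs.prod ht),
    Set.mk_preimage_prod_right_eq_if, subsetMeasure, Measure.dirac_apply]
  rw [Finset.sum_mul]
  refine Finset.sum_congr rfl fun T hT => ?_
  by_cases h : T ∈ s <;> simp [h, Set.indicator, mul_assoc]

lemma map_finsetSum_smul {β γ : Type*} [MeasurableSpace β] [MeasurableSpace γ] {ι : Type*}
    (s : Finset ι) (c : ι → ℝ≥0∞) (μs : ι → Measure β) {g : β → γ} (hg : Measurable g) :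
    (∑ i ∈ s, c i • μs i).map g = ∑ i ∈ s, c i • (μs i).map g := by
  ext u hu
  simp only [Measure.map_apply hg hu, Measure.coe_finset_sum, Finset.sum_apply,
    Measure.smul_apply, smul_eq_mul]

lemma law_decomp (n m : ℕ) (P : Measure (Fin n → ℝ)) [IsProbabilityMeasure P]
    (D1 : Finset (Fin m)) (w1 : Finset (Fin m) → ℝ)
    (D2 : Finset (Fin n)) (w2 : Finset (Fin n) → ℝ) :
    (subsetMeasure m D1 w1).prod ((subsetMeasure n D2 w2).prod P)
      = ∑ A ∈ D1.powerset, ∑ T ∈ D2.powerset,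
          (ENNReal.ofReal (w1 A) * ENNReal.ofReal (w2 T)) •
            P.map (fun x => (A, (T, x))) := by
  rw [subsetMeasure_prod D1 w1 ((subsetMeasure n D2 w2).prod P), subsetMeasure_prod D2 w2 P]
  refine Finset.sum_congr rfl fun A _ => ?_
  rw [map_finsetSum_smul _ _ _ measurable_prodMk_left, Finset.smul_sum]
  refine Finset.sum_congr rfl fun T _ => ?_
  rw [smul_smul, Measure.map_map measurable_prodMk_left measurable_prodMk_left]
  rfl

lemma aesm_finsetSum {α γ : Type*} [MeasurableSpace α] [TopologicalSpace γ]
    [TopologicalSpace.PseudoMetrizableSpace γ] {ι : Type*}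
    (s : Finset ι) (μs : ι → Measure α) {g : α → γ}
    (h : ∀ i ∈ s, AEStronglyMeasurable g (μs i)) :
    AEStronglyMeasurable g (∑ i ∈ s, μs i) := by
  classical
  induction s using Finset.induction_on with
  | empty => simp only [Finset.sum_empty]; exact aestronglyMeasurable_zero_measure g
  | insert a s hx ih =>
      rw [Finset.sum_insert hx]
      exact AEStronglyMeasurable.add_measure (h _ (Finset.mem_insert_self _ _))
        (ih fun i hi => h i (Finset.mem_insert_of_mem hi))

lemma aesm_smul_measure {α γ : Type*} [MeasurableSpace α] [TopologicalSpace γ]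
    {μ : Measure α} {g : α → γ} (c : ℝ≥0∞) (h : AEStronglyMeasurable g μ) :
    AEStronglyMeasurable g (c • μ) :=
  h.mono_ac (MeasureTheory.Measure.smul_absolutelyContinuous)

lemma measurableEmbedding_pair {n m : ℕ} (A : Finset (Fin m)) (T : Finset (Fin n)) :
    MeasurableEmbedding (fun x : Fin n → ℝ => (A, (T, x))) :=
  (measurableEmbedding_prodMk_left A).comp (measurableEmbedding_prodMk_left T)

lemma aesm_law {n m : ℕ} (P : Measure (Fin n → ℝ)) [IsProbabilityMeasure P]
    (D1 : Finset (Fin m)) (w1 : Finset (Fin m) → ℝ)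
    (D2 : Finset (Fin n)) (w2 : Finset (Fin n) → ℝ)
    (g : Finset (Fin m) × (Finset (Fin n) × (Fin n → ℝ)) → ℝ)
    (hg : ∀ A T, AEStronglyMeasurable (fun x => g (A, (T, x))) P) :
    AEStronglyMeasurable g
      ((subsetMeasure m D1 w1).prod ((subsetMeasure n D2 w2).prod P)) := by
  rw [law_decomp]
  refine aesm_finsetSum _ _ fun A _ => aesm_finsetSum _ _ fun T _ => ?_
  exact aesm_smul_measure _
    (((measurableEmbedding_pair A T).aestronglyMeasurable_map_iff).mpr (hg A T))

lemma integrable_law {n m : ℕ} (P : Measure (Fin n → ℝ)) [IsProbabilityMeasure P]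
    (D1 : Finset (Fin m)) (w1 : Finset (Fin m) → ℝ)
    (D2 : Finset (Fin n)) (w2 : Finset (Fin n) → ℝ)
    (g : Finset (Fin m) × (Finset (Fin n) × (Fin n → ℝ)) → ℝ)
    (hg : ∀ A T, Integrable (fun x => g (A, (T, x))) P) :
    Integrable g
      ((subsetMeasure m D1 w1).prod ((subsetMeasure n D2 w2).prod P)) := by
  rw [law_decomp]
  refine integrable_finset_sum_measure.mpr fun A _ =>
    integrable_finset_sum_measure.mpr fun T _ => ?_
  by_cases hc : (ENNReal.ofReal (w1 A) * ENNReal.ofReal (w2 T)) = 0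
  · rw [hc, zero_smul]; exact integrable_zero_measure
  · refine (integrable_smul_measure hc (by finiteness)).mpr ?_
    exact ((measurableEmbedding_pair A T).integrable_map_iff).mpr (hg A T)

lemma integral_law {n m : ℕ} (P : Measure (Fin n → ℝ)) [IsProbabilityMeasure P]
    (D1 : Finset (Fin m)) (w1 : Finset (Fin m) → ℝ)
    (D2 : Finset (Fin n)) (w2 : Finset (Fin n) → ℝ)
    (hw1 : ∀ A ∈ D1.powerset, 0 ≤ w1 A) (hw2 : ∀ T ∈ D2.powerset, 0 ≤ w2 T)
    (g : Finset (Fin m) × (Finset (Fin n) × (Fin n → ℝ)) → ℝ)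
    (hg : ∀ A T, Integrable (fun x => g (A, (T, x))) P) :
    ∫ q, g q ∂((subsetMeasure m D1 w1).prod ((subsetMeasure n D2 w2).prod P))
      = ∑ A ∈ D1.powerset, ∑ T ∈ D2.powerset,
          (w1 A * w2 T) * ∫ x, g (A, (T, x)) ∂P := by
  have hcomp : ∀ (A : Finset (Fin m)) (T : Finset (Fin n)),
      Integrable g ((ENNReal.ofReal (w1 A) * ENNReal.ofReal (w2 T)) •
        P.map (fun x => (A, (T, x)))) := by
    intro A T
    by_cases hc : (ENNReal.ofReal (w1 A) * ENNReal.ofReal (w2 T)) = 0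
    · rw [hc, zero_smul]; exact integrable_zero_measure
    · exact (integrable_smul_measure hc (by finiteness)).mpr
        (((measurableEmbedding_pair A T).integrable_map_iff).mpr (hg A T))
  rw [law_decomp]
  rw [integral_finset_sum_measure (fun A _ =>
    integrable_finset_sum_measure.mpr fun T _ => hcomp A T)]
  refine Finset.sum_congr rfl fun A hA => ?_
  rw [integral_finset_sum_measure (fun T _ => hcomp A T)]
  refine Finset.sum_congr rfl fun T hT => ?_
  rw [integral_smul_measure, (measurableEmbedding_pair A T).integral_map,
    ENNReal.toReal_mul, ENNReal.toReal_ofReal (hw1 A hA), ENNReal.toReal_ofReal (hw2 T hT)]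
  rfl

lemma measurable_mergePair (n : ℕ) (S : Finset (Fin n)) :
    Measurable (fun q : (Fin n → ℝ) × (Fin n → ℝ) => merge n S q.1 q.2) := by
  apply measurable_pi_lambda
  intro a
  by_cases h : a ∈ S
  · simpa [merge, h, Function.comp_def] using (measurable_pi_apply a).comp measurable_fst
  · simpa [merge, h, Function.comp_def] using (measurable_pi_apply a).comp measurable_snd

lemma slice_memLp (n : ℕ) (P : Measure (Fin n → ℝ)) [IsProbabilityMeasure P]
    {f : (Fin n → ℝ) → ℝ} {p : ℝ≥0∞} (hf : MemLp f p (tildeP n P)) (S : Finset (Fin n)) :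
    MemLp (fun q : (Fin n → ℝ) × (Fin n → ℝ) => f (merge n S q.1 q.2)) p (P.prod P) := by
  have h1 : prodPart n P S ≤ (2 : ℝ≥0∞) ^ n • tildeP n P := by
    rw [tildeP, smul_smul, ENNReal.mul_inv_cancel (by simp) (by simp), one_smul]
    rw [← Measure.sum_fintype]
    exact Measure.le_sum _ S
  have h2 : MemLp f p (prodPart n P S) :=
    ((hf.smul_measure (ENNReal.pow_ne_top ENNReal.ofNat_ne_top)).mono_measure h1)
  rw [prodPart] at h2
  exact (memLp_map_measure_iff h2.aestronglyMeasurable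
    (measurable_mergePair n S).aemeasurable).mp h2

lemma slice_int_ae (n : ℕ) (P : Measure (Fin n → ℝ)) [IsProbabilityMeasure P]
    {f : (Fin n → ℝ) → ℝ} (hf : MemLp f 1 (tildeP n P)) (S : Finset (Fin n)) :
    ∀ᵐ xs ∂P, Integrable (fun x => f (merge n S xs x)) P := by
  have h := slice_memLp n P hf S
  exact (memLp_one_iff_integrable.mp h).prod_right_ae

lemma slice_memLp2_ae (n : ℕ) (P : Measure (Fin n → ℝ)) [IsProbabilityMeasure P]
    {f : (Fin n → ℝ) → ℝ} (hf : MemLp f 2 (tildeP n P)) (S : Finset (Fin n)) :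
    ∀ᵐ xs ∂P, MemLp (fun x => f (merge n S xs x)) 2 P := by
  have h := slice_memLp n P hf S
  have hsq : Integrable
      (fun q : (Fin n → ℝ) × (Fin n → ℝ) => (f (merge n S q.1 q.2)) ^ 2) (P.prod P) :=
    h.integrable_sq
  have ha := h.aestronglyMeasurable.prodMk_left
  filter_upwards [hsq.prod_right_ae, ha] with xs h1 h2
  exact (memLp_two_iff_integrable_sq h2).mpr h1

end AuxLemmas

/-- Consistency and error rate of the Monte Carlo coalitional
estimator. Let `f ∈ L¹(P̃_X)`, let `𝒫 = {S_1,…,S_m}` partition `N`, let the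
coefficient families be nonnegative and each sum to one, and let
`(𝒜^(k), 𝒯^(k), X^(k))`, `k ∈ ℕ`, be i.i.d. samples from
`P_j^{(g,𝒫)} ⊗ P_i^{(g,S_j)} ⊗ P_X` on a probability space `(Ω, Pr)`. Then for
`P_X`-almost every `x*`, the Monte Carlo error converges to `0` in probability as
`K → ∞`; and if moreover `f ∈ L²(P̃_X)`, then
`‖𝓔_K‖²_{L²(Pr)} ≤ K⁻¹·Var(Δ_i(𝒜^(1), 𝒯^(1), X^(1); x*, f))
  ≤ (4/K)·ν_{x*}^{(2)}(f,𝒫,S_j)·max_{A⊆M∖{j}, T⊆S_j∖{i}} (w¹_j(A,M) w²_i(T,S_j))`. -/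
theorem stmt14 (n m : ℕ) (P : Measure (Fin n → ℝ)) [IsProbabilityMeasure P]
    (f : (Fin n → ℝ) → ℝ) (hf : MemLp f 1 (tildeP n P))
    (Pt : Fin m → Finset (Fin n))
    (hPtne : ∀ j, (Pt j).Nonempty)
    (hPtdisj : ∀ j k, j ≠ k → Disjoint (Pt j) (Pt k))
    (hPtcover : Finset.univ.biUnion Pt = (Finset.univ : Finset (Fin n)))
    (j : Fin m) (i : Fin n) (hi : i ∈ Pt j)
    (w1 : Finset (Fin m) → ℝ) (w2 : Finset (Fin n) → ℝ)
    (hw10 : ∀ A ∈ (univ.erase j).powerset, 0 ≤ w1 A)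
    (hw11 : ∑ A ∈ (univ.erase j).powerset, w1 A = 1)
    (hw20 : ∀ T ∈ ((Pt j).erase i).powerset, 0 ≤ w2 T)
    (hw21 : ∑ T ∈ ((Pt j).erase i).powerset, w2 T = 1)
    {Ω : Type} [MeasurableSpace Ω] (Pr : Measure Ω) [IsProbabilityMeasure Pr]
    (Z : ℕ → Ω → Finset (Fin m) × (Finset (Fin n) × (Fin n → ℝ)))
    (hZmeas : ∀ k, Measurable (Z k))
    (hlaw : ∀ k, Measure.map (Z k) Pr =
      (subsetMeasure m (univ.erase j) w1).prod
        ((subsetMeasure n ((Pt j).erase i) w2).prod P))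
    (hindep : iIndepFun Z Pr) :
    ∀ᵐ xs ∂P,
      TendstoInMeasure Pr
        (fun (K : ℕ) (ω : Ω) =>
          (K : ℝ)⁻¹ * ∑ k ∈ Finset.range K, cDelta n m Pt f i xs (Z k ω)
            - coalVal n m Pt j i w1 w2 (vME n P f xs))
        atTop (fun _ => 0) ∧
      (MemLp f 2 (tildeP n P) →
        ∀ K : ℕ, 0 < K →
          (∫ ω, ((K : ℝ)⁻¹ * ∑ k ∈ Finset.range K, cDelta n m Pt f i xs (Z k ω)
              - coalVal n m Pt j i w1 w2 (vME n P f xs)) ^ 2 ∂Pr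
            ≤ (K : ℝ)⁻¹ * variance (fun ω => cDelta n m Pt f i xs (Z 0 ω)) Pr) ∧
          (K : ℝ)⁻¹ * variance (fun ω => cDelta n m Pt f i xs (Z 0 ω)) Pr
            ≤ (4 / K) *
              (∑ A ∈ (univ.erase j).powerset, ∑ T ∈ (Pt j).powerset,
                ∫ x, |f (merge n (qUnion n m Pt A ∪ T) xs x)| ^ 2 ∂P) *
              (((univ.erase j).powerset ×ˢ ((Pt j).erase i).powerset).sup'
                ⟨(∅, ∅), Finset.mem_product.mpr
                  ⟨Finset.empty_mem_powerset _, Finset.empty_mem_powerset _⟩⟩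
                (fun q => w1 q.1 * w2 q.2))) := by
  classical
  have hae1 : ∀ᵐ xs ∂P, ∀ S : Finset (Fin n),
      Integrable (fun x => f (merge n S xs x)) P :=
    ae_all_iff.mpr fun S => slice_int_ae n P hf S
  have hae2 : ∀ᵐ xs ∂P, MemLp f 2 (tildeP n P) →
      ∀ S : Finset (Fin n), MemLp (fun x => f (merge n S xs x)) 2 P := by
    by_cases h2 : MemLp f 2 (tildeP n P)
    · filter_upwards [ae_all_iff.mpr fun S => slice_memLp2_ae n P h2 S] with xs h _
      exact h
    · exact ae_of_all _ fun xs h => absurd h h2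
  filter_upwards [hae1, hae2] with xs hI hM2
  set g : Finset (Fin m) × (Finset (Fin n) × (Fin n → ℝ)) → ℝ := cDelta n m Pt f i xs
    with hgdef
  set c : ℝ := coalVal n m Pt j i w1 w2 (vME n P f xs) with hcdef
  set μlaw := (subsetMeasure m (univ.erase j) w1).prod
      ((subsetMeasure n ((Pt j).erase i) w2).prod P) with hμlaw
  have hslice : ∀ (A : Finset (Fin m)) (T : Finset (Fin n)),
      (fun x => g (A, (T, x)))
        = fun x => f (merge n (insert i (qUnion n m Pt A ∪ T)) xs x)
            - f (merge n (qUnion n m Pt A ∪ T) xs x) := fun A T => rfl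
  have hsliceI : ∀ A T, Integrable (fun x => g (A, (T, x))) P := by
    intro A T; rw [hslice]; exact (hI _).sub (hI _)
  have hsliceA : ∀ A T, AEStronglyMeasurable (fun x => g (A, (T, x))) P :=
    fun A T => (hsliceI A T).aestronglyMeasurable
  have hgm : AEStronglyMeasurable g μlaw := aesm_law P _ w1 _ w2 g hsliceA
  have hgint : Integrable g μlaw := integrable_law P _ w1 _ w2 g hsliceI
  have hexp : ∫ q, g q ∂μlaw = c := by
    rw [hμlaw, integral_law P _ w1 _ w2 hw10 hw20 g hsliceI, hcdef, coalVal]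
    refine Finset.sum_congr rfl fun A hA => Finset.sum_congr rfl fun T hT => ?_
    rw [hslice, integral_sub (hI _) (hI _)]
    rfl
  set g' : Finset (Fin m) × (Finset (Fin n) × (Fin n → ℝ)) → ℝ := hgm.mk g with hg'def
  have hg'sm : StronglyMeasurable g' := hgm.stronglyMeasurable_mk
  have hgg' : g =ᵐ[μlaw] g' := hgm.ae_eq_mk
  have hmapZ : ∀ k, Measure.map (Z k) Pr = μlaw := fun k => hlaw k
  have hcomp_eq : ∀ k : ℕ, (fun ω => g (Z k ω)) =ᵐ[Pr] fun ω => g' (Z k ω) := by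
    intro k
    exact ae_eq_comp (μ := Pr) (hZmeas k).aemeasurable
      (show g =ᵐ[Measure.map (Z k) Pr] g' by rw [hmapZ k]; exact hgg')
  set Y : ℕ → Ω → ℝ := fun k ω => g' (Z k ω) with hYdef
  have hYmeas : ∀ k, Measurable (Y k) := fun k => hg'sm.measurable.comp (hZmeas k)
  have hYident : ∀ k, IdentDistrib (Y k) (Y 0) Pr Pr := by
    intro k
    have h1 : ∀ l : ℕ, Measure.map (Y l) Pr = Measure.map g' μlaw := by
      intro l
      have h2 := Measure.map_map (f := Z l) (μ := Pr) hg'sm.measurable (hZmeas l)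
      rw [hmapZ l] at h2
      exact h2.symm
    exact ⟨(hYmeas k).aemeasurable, (hYmeas 0).aemeasurable, by rw [h1 k, h1 0]⟩
  have hYindep : Pairwise (Function.onFun (IndepFun · · Pr) Y) := fun k l hkl =>
    (hindep.indepFun hkl).comp hg'sm.measurable hg'sm.measurable
  have hg'int : Integrable g' μlaw := hgint.congr hgg'
  have hYint : Integrable (Y 0) Pr := by
    have h2 : Integrable g' (Measure.map (Z 0) Pr) := by rw [hmapZ 0]; exact hg'int
    exact (integrable_map_measure (by rw [hmapZ 0]; exact hg'sm.aestronglyMeasurable)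
      (hZmeas 0).aemeasurable).mp h2
  have hEY : ∫ ω, Y 0 ω ∂Pr = c := by
    have h1 : ∫ ω, Y 0 ω ∂Pr = ∫ q, g' q ∂(Measure.map (Z 0) Pr) :=
      (integral_map (hZmeas 0).aemeasurable
        (by rw [hmapZ 0]; exact hg'sm.aestronglyMeasurable)).symm
    rw [h1, hmapZ 0, ← integral_congr_ae hgg', hexp]
  have hall : ∀ᵐ ω ∂Pr, ∀ k, g (Z k ω) = g' (Z k ω) := ae_all_iff.mpr fun k => hcomp_eq k
  have hLLN := strong_law_ae Y hYint hYindep hYident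
  rw [hEY] at hLLN
  constructor
  · -- Part 1: convergence in probability
    refine tendstoInMeasure_of_tendsto_ae (fun K => ?_) ?_
    · have hmeas : Measurable fun ω => (K : ℝ)⁻¹ * ∑ k ∈ Finset.range K, Y k ω - c :=
        ((Finset.measurable_sum _ fun k _ => hYmeas k).const_mul _).sub measurable_const
      refine hmeas.aestronglyMeasurable.congr ?_
      filter_upwards [hall] with ω h2
      have : ∑ k ∈ Finset.range K, Y k ω = ∑ k ∈ Finset.range K, g (Z k ω) :=
        Finset.sum_congr rfl fun k _ => (h2 k).symm
      rw [this]
    · filter_upwards [hLLN, hall] with ω h1 h2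
      have h3 := (h1.sub_const c).congr (f₂ := fun K : ℕ =>
          (K : ℝ)⁻¹ * ∑ k ∈ Finset.range K, g (Z k ω) - c) ?_
      · simpa [sub_self] using h3
      · intro K
        rw [smul_eq_mul]
        congr 1
        congr 1
        exact Finset.sum_congr rfl fun k _ => (h2 k).symm
  · -- Part 2: L² error bounds
    intro h2 K hK
    have hM2' : ∀ S : Finset (Fin n), MemLp (fun x => f (merge n S xs x)) 2 P := hM2 h2
    have hsliceM2 : ∀ A T, MemLp (fun x => g (A, (T, x))) 2 P := by
      intro A T; rw [hslice]; exact (hM2' _).sub (hM2' _)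
    have hsqI : ∀ A T, Integrable (fun x => (g (A, (T, x))) ^ 2) P :=
      fun A T => (hsliceM2 A T).integrable_sq
    have hg2int : Integrable (fun q => g q ^ 2) μlaw :=
      integrable_law P _ w1 _ w2 (fun q => g q ^ 2) hsqI
    have hgM2 : MemLp g 2 μlaw := (memLp_two_iff_integrable_sq hgm).mpr hg2int
    have hg'M2 : MemLp g' 2 μlaw := hgM2.ae_eq hgg'
    have hYM2 : ∀ k, MemLp (Y k) 2 Pr := by
      intro k
      have h3 : MemLp g' 2 (Measure.map (Z k) Pr) := by rw [hmapZ k]; exact hg'M2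
      exact (memLp_map_measure_iff (by rw [hmapZ k]; exact hg'sm.aestronglyMeasurable)
        (hZmeas k).aemeasurable).mp h3
    have hgZ0aesm : AEStronglyMeasurable (fun ω => g (Z 0 ω)) Pr :=
      ((hYmeas 0).aestronglyMeasurable).congr (hcomp_eq 0).symm
    have hvar_eq : variance (fun ω => g (Z 0 ω)) Pr = variance (Y 0) Pr :=
      (IdentDistrib.of_ae_eq hgZ0aesm.aemeasurable (hcomp_eq 0)).variance_eq
    have hKne : (K : ℝ) ≠ 0 := Nat.cast_ne_zero.mpr hK.ne'
    set W : Ω → ℝ := ∑ k ∈ Finset.range K, Y k with hWdef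
    have hWM2 : MemLp W 2 Pr := memLp_finset_sum' _ fun k _ => hYM2 k
    have hEW : ∫ ω, W ω ∂Pr = K * c := by
      rw [hWdef]
      have h4 : ∀ ω : Ω, (∑ k ∈ Finset.range K, Y k) ω = ∑ k ∈ Finset.range K, Y k ω :=
        fun ω => Finset.sum_apply ω (Finset.range K) Y
      rw [integral_congr_ae (ae_of_all _ h4),
        integral_finset_sum _ fun k _ => (hYM2 k).integrable one_le_two]
      have h5 : ∀ k ∈ Finset.range K, ∫ ω, Y k ω ∂Pr = c := fun k _ => by
        rw [(hYident k).integral_eq, hEY]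
      rw [Finset.sum_congr rfl h5, Finset.sum_const, Finset.card_range, nsmul_eq_mul]
    have hVarW : variance W Pr = K * variance (Y 0) Pr := by
      rw [hWdef, IndepFun.variance_sum (fun k _ => hYM2 k)
        (fun k _ l _ hkl => hYindep hkl)]
      have h5 : ∀ k ∈ Finset.range K, variance (Y k) Pr = variance (Y 0) Pr :=
        fun k _ => (hYident k).variance_eq
      rw [Finset.sum_congr rfl h5, Finset.sum_const, Finset.card_range, nsmul_eq_mul]
    constructor
    · -- first inequality
      have heq1 : (fun ω => ((K : ℝ)⁻¹ * ∑ k ∈ Finset.range K, g (Z k ω) - c) ^ 2)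
          =ᵐ[Pr] fun ω => (K : ℝ)⁻¹ ^ 2 * (W ω - K * c) ^ 2 := by
        filter_upwards [hall] with ω h3
        have h4 : ∑ k ∈ Finset.range K, g (Z k ω) = W ω := by
          rw [hWdef, Finset.sum_apply]
          exact Finset.sum_congr rfl fun k _ => h3 k
        rw [h4]
        have h5 : (K : ℝ)⁻¹ * W ω - c = (K : ℝ)⁻¹ * (W ω - K * c) := by
          field_simp
        rw [h5, mul_pow]
      have hvarW_int : ∫ ω, (W ω - ↑K * c) ^ 2 ∂Pr = variance W Pr := by
        rw [variance_eq_integral hWM2.aestronglyMeasurable.aemeasurable]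
        refine integral_congr_ae (ae_of_all _ fun ω => ?_)
        simp [hEW]
      rw [integral_congr_ae heq1, integral_const_mul, hvarW_int, hVarW, hvar_eq]
      rw [show (K : ℝ)⁻¹ ^ 2 * ((K : ℝ) * variance (Y 0) Pr)
          = (K : ℝ)⁻¹ * variance (Y 0) Pr by field_simp]
    · -- second inequality
      set Ifn : Finset (Fin n) → ℝ := fun S => ∫ x, f (merge n S xs x) ^ 2 ∂P with hIfn
      have hIfn_nonneg : ∀ S, 0 ≤ Ifn S := fun S => integral_nonneg fun x => sq_nonneg _
      set ν : ℝ := ∑ A ∈ (univ.erase j).powerset, ∑ T ∈ (Pt j).powerset,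
          ∫ x, |f (merge n (qUnion n m Pt A ∪ T) xs x)| ^ 2 ∂P with hν
      have hνalt : ν = ∑ A ∈ (univ.erase j).powerset, ∑ T ∈ (Pt j).powerset,
          Ifn (qUnion n m Pt A ∪ T) := by
        rw [hν, hIfn]
        simp only [sq_abs]
      set Wmax : ℝ := (((univ.erase j).powerset ×ˢ ((Pt j).erase i).powerset).sup'
          ⟨(∅, ∅), Finset.mem_product.mpr
            ⟨Finset.empty_mem_powerset _, Finset.empty_mem_powerset _⟩⟩
          (fun q => w1 q.1 * w2 q.2)) with hWmax
      have hmem00 : ((∅ : Finset (Fin m)), (∅ : Finset (Fin n)))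
          ∈ (univ.erase j).powerset ×ˢ ((Pt j).erase i).powerset :=
        Finset.mem_product.mpr ⟨Finset.empty_mem_powerset _, Finset.empty_mem_powerset _⟩
      have hWmax_nonneg : 0 ≤ Wmax := by
        refine le_trans ?_ (Finset.le_sup' (fun q => w1 q.1 * w2 q.2) hmem00)
        exact mul_nonneg (hw10 _ (Finset.empty_mem_powerset _))
          (hw20 _ (Finset.empty_mem_powerset _))
      -- termwise bound on the squared slice integral
      have hterm : ∀ A ∈ (univ.erase j).powerset, ∀ T ∈ ((Pt j).erase i).powerset,
          (w1 A * w2 T) * ∫ x, (g (A, (T, x))) ^ 2 ∂P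
            ≤ Wmax * (2 * Ifn (insert i (qUnion n m Pt A ∪ T))
                + 2 * Ifn (qUnion n m Pt A ∪ T)) := by
        intro A hA T hT
        have h6 : ∫ x, (g (A, (T, x))) ^ 2 ∂P
            ≤ 2 * ∫ x, f (merge n (insert i (qUnion n m Pt A ∪ T)) xs x) ^ 2 ∂P
              + 2 * ∫ x, f (merge n (qUnion n m Pt A ∪ T) xs x) ^ 2 ∂P := by
          have h7 : Integrable (fun x =>
              2 * f (merge n (insert i (qUnion n m Pt A ∪ T)) xs x) ^ 2
                + 2 * f (merge n (qUnion n m Pt A ∪ T) xs x) ^ 2) P :=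
            ((hM2' _).integrable_sq.const_mul 2).add ((hM2' _).integrable_sq.const_mul 2)
          have h8 := integral_mono (hsqI A T) h7 (fun x => by
            have hx : g (A, (T, x))
                = f (merge n (insert i (qUnion n m Pt A ∪ T)) xs x)
                  - f (merge n (qUnion n m Pt A ∪ T) xs x) := congrFun (hslice A T) x
            rw [hx]
            nlinarith [sq_nonneg (f (merge n (insert i (qUnion n m Pt A ∪ T)) xs x)
              + f (merge n (qUnion n m Pt A ∪ T) xs x))])
          rwa [integral_add ((hM2' _).integrable_sq.const_mul 2)
            ((hM2' _).integrable_sq.const_mul 2), integral_const_mul, integral_const_mul] at h8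
        have hmemAT : (A, T) ∈ (univ.erase j).powerset ×ˢ ((Pt j).erase i).powerset :=
          Finset.mem_product.mpr ⟨hA, hT⟩
        have h9 : w1 A * w2 T ≤ Wmax :=
          Finset.le_sup' (fun q => w1 q.1 * w2 q.2) hmemAT
        calc (w1 A * w2 T) * ∫ x, (g (A, (T, x))) ^ 2 ∂P
            ≤ Wmax * ∫ x, (g (A, (T, x))) ^ 2 ∂P :=
              mul_le_mul_of_nonneg_right h9 (integral_nonneg fun x => sq_nonneg _)
          _ ≤ Wmax * (2 * Ifn (insert i (qUnion n m Pt A ∪ T))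
                + 2 * Ifn (qUnion n m Pt A ∪ T)) :=
              mul_le_mul_of_nonneg_left h6 hWmax_nonneg
      -- sums of slice square integrals are bounded by ν
      have hA1 : ∀ A : Finset (Fin m), ∑ T ∈ ((Pt j).erase i).powerset,
          Ifn (insert i (qUnion n m Pt A ∪ T))
            ≤ ∑ T ∈ (Pt j).powerset, Ifn (qUnion n m Pt A ∪ T) := by
        intro A
        have hinj : ∀ T1 ∈ ((Pt j).erase i).powerset, ∀ T2 ∈ ((Pt j).erase i).powerset,
            insert i T1 = insert i T2 → T1 = T2 := by
          intro T1 h1 T2 h3 heq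
          have hi1 : i ∉ T1 := fun hmem =>
            Finset.notMem_erase i (Pt j) (Finset.mem_powerset.mp h1 hmem)
          have hi2 : i ∉ T2 := fun hmem =>
            Finset.notMem_erase i (Pt j) (Finset.mem_powerset.mp h3 hmem)
          rw [← Finset.erase_insert hi1, ← Finset.erase_insert hi2, heq]
        calc ∑ T ∈ ((Pt j).erase i).powerset, Ifn (insert i (qUnion n m Pt A ∪ T))
            = ∑ T ∈ ((Pt j).erase i).powerset.image (insert i),
                Ifn (qUnion n m Pt A ∪ T) := by
              rw [Finset.sum_image hinj]
              exact Finset.sum_congr rfl fun T _ => by rw [Finset.union_insert]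
          _ ≤ ∑ T ∈ (Pt j).powerset, Ifn (qUnion n m Pt A ∪ T) := by
              refine Finset.sum_le_sum_of_subset_of_nonneg ?_
                fun T _ _ => hIfn_nonneg _
              intro T hT
              obtain ⟨T', hT', rfl⟩ := Finset.mem_image.mp hT
              exact Finset.mem_powerset.mpr (Finset.insert_subset hi
                ((Finset.mem_powerset.mp hT').trans (Finset.erase_subset _ _)))
      have hA2 : ∀ A : Finset (Fin m), ∑ T ∈ ((Pt j).erase i).powerset,
          Ifn (qUnion n m Pt A ∪ T)
            ≤ ∑ T ∈ (Pt j).powerset, Ifn (qUnion n m Pt A ∪ T) := by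
        intro A
        refine Finset.sum_le_sum_of_subset_of_nonneg ?_ fun T _ _ => hIfn_nonneg _
        exact Finset.powerset_mono.mpr (Finset.erase_subset _ _)
      have hsum1 : ∑ A ∈ (univ.erase j).powerset, ∑ T ∈ ((Pt j).erase i).powerset,
          Ifn (insert i (qUnion n m Pt A ∪ T)) ≤ ν := by
        rw [hνalt]; exact Finset.sum_le_sum fun A _ => hA1 A
      have hsum2 : ∑ A ∈ (univ.erase j).powerset, ∑ T ∈ ((Pt j).erase i).powerset,
          Ifn (qUnion n m Pt A ∪ T) ≤ ν := by
        rw [hνalt]; exact Finset.sum_le_sum fun A _ => hA2 A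
      -- variance bound
      have hvar_le : variance (Y 0) Pr ≤ ∫ ω, (Y 0 ω) ^ 2 ∂Pr := by
        have h6 := variance_le_expectation_sq (μ := Pr) (hYM2 0).aestronglyMeasurable
        simpa using h6
      have hEY2 : ∫ ω, (Y 0 ω) ^ 2 ∂Pr = ∫ q, g q ^ 2 ∂μlaw := by
        have hsm2 : AEStronglyMeasurable (fun q => g' q ^ 2) (Measure.map (Z 0) Pr) := by
          rw [hmapZ 0]
          exact (hg'sm.measurable.pow_const 2).aestronglyMeasurable
        have h6 : ∫ ω, (Y 0 ω) ^ 2 ∂Pr = ∫ q, g' q ^ 2 ∂(Measure.map (Z 0) Pr) :=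
          (integral_map (hZmeas 0).aemeasurable hsm2).symm
        rw [h6, hmapZ 0]
        exact integral_congr_ae ((hgg'.fun_comp (· ^ 2)).symm)
      have hEg2 : ∫ q, g q ^ 2 ∂μlaw
          = ∑ A ∈ (univ.erase j).powerset, ∑ T ∈ ((Pt j).erase i).powerset,
              (w1 A * w2 T) * ∫ x, (g (A, (T, x))) ^ 2 ∂P := by
        rw [hμlaw]; exact integral_law P _ w1 _ w2 hw10 hw20 _ hsqI
      have hbound : variance (Y 0) Pr ≤ 4 * ν * Wmax := by
        calc variance (Y 0) Pr ≤ ∫ ω, (Y 0 ω) ^ 2 ∂Pr := hvar_le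
          _ = ∑ A ∈ (univ.erase j).powerset, ∑ T ∈ ((Pt j).erase i).powerset,
              (w1 A * w2 T) * ∫ x, (g (A, (T, x))) ^ 2 ∂P := by rw [hEY2, hEg2]
          _ ≤ ∑ A ∈ (univ.erase j).powerset, ∑ T ∈ ((Pt j).erase i).powerset,
              Wmax * (2 * Ifn (insert i (qUnion n m Pt A ∪ T))
                + 2 * Ifn (qUnion n m Pt A ∪ T)) :=
            Finset.sum_le_sum fun A hA => Finset.sum_le_sum fun T hT => hterm A hA T hT
          _ = Wmax * (2 * (∑ A ∈ (univ.erase j).powerset,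
                ∑ T ∈ ((Pt j).erase i).powerset, Ifn (insert i (qUnion n m Pt A ∪ T)))
              + 2 * (∑ A ∈ (univ.erase j).powerset,
                ∑ T ∈ ((Pt j).erase i).powerset, Ifn (qUnion n m Pt A ∪ T))) := by
            simp only [Finset.mul_sum, Finset.sum_add_distrib, mul_add]
          _ ≤ Wmax * (2 * ν + 2 * ν) := by
            refine mul_le_mul_of_nonneg_left ?_ hWmax_nonneg
            exact add_le_add (by linarith [hsum1]) (by linarith [hsum2])
          _ = 4 * ν * Wmax := by ring
      calc (K : ℝ)⁻¹ * variance (fun ω => g (Z 0 ω)) Pr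
          = (K : ℝ)⁻¹ * variance (Y 0) Pr := by rw [hvar_eq]
        _ ≤ (K : ℝ)⁻¹ * (4 * ν * Wmax) :=
            mul_le_mul_of_nonneg_left hbound (inv_nonneg.mpr (Nat.cast_nonneg K))
        _ = 4 / (K : ℝ) * ν * Wmax := by rw [div_eq_mul_inv]; ring
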